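/- Let V be a separable Hilbert space over ℂ with a Hilbert basis (orthonormal set with dense span) {e_j}_{j∈ℕ}, let W be a separable Banach space, and let {f_k}_{k∈ℕ} ⊂ W be a countable subset with dense span. Let n ∈ ℕ, n ≥ 1. For α ∈ ℕ^n and k ∈ ℕ, let e^α ⊗ f_k ∈ B^n(V,W) be the continuous n-multilinear map (v₁, …, vₙ) ↦ (∏_{i=1}^n ⟨e_{α_i}, v_i⟩)·f_k. Then each e^α ⊗ f_k lies in K^n(V,W), and the linear span of {e^α ⊗ f_k : α ∈ ℕ^n, k ∈ ℕ} is dense in K^n(V,W) with respect to the multilinear operator norm of B^n(V,W). -/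

import Mathlib

/-- The spaces `K^n(V,W)` of compact `n`-multilinear maps, defined inductively:
`K^1(V,W)` is the set of compact operators in `B(V,W)`; for `n ≥ 2`, a continuous
`n`-multilinear map lies in `K^n(V,W)` iff the curried map `v ↦ λ(v,·,…,·)` takes values
in `K^{n-1}(V,W)` and is a compact operator from `V` into `K^{n-1}(V,W)` (with the subspace
topology inherited from the norm of `B^{n-1}(V,W)`). -/
def KMultilinear (𝕜 V W : Type*) [RCLike 𝕜]
    [NormedAddCommGroup V] [NormedSpace 𝕜 V]
    [NormedAddCommGroup W] [NormedSpace 𝕜 W] :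
    (n : ℕ) → Set (ContinuousMultilinearMap 𝕜 (fun _ : Fin n => V) W)
  | 0 => Set.univ
  | 1 => {f | IsCompactOperator fun v : V => f fun _ => v}
  | (n + 2) => {f | ∃ hf : ∀ v : V, f.curryLeft v ∈ KMultilinear 𝕜 V W (n + 1),
      IsCompactOperator fun v : V => (⟨f.curryLeft v, hf v⟩ : KMultilinear 𝕜 V W (n + 1))}

/-- The elementary `n`-multilinear map `e^α ⊗ f_k : (v₁,…,vₙ) ↦ (∏ i ⟨e_{α i}, v_i⟩) • f_k`. -/
noncomputable def elemMultilinear {V W : Type*}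
    [NormedAddCommGroup V] [InnerProductSpace ℂ V]
    [NormedAddCommGroup W] [NormedSpace ℂ W]
    (n : ℕ) (e : ℕ → V) (f : ℕ → W) (α : Fin n → ℕ) (k : ℕ) :
    ContinuousMultilinearMap ℂ (fun _ : Fin n => V) W :=
  (ContinuousMultilinearMap.mkPiRing ℂ (Fin n) (f k)).compContinuousLinearMap
    (fun i => innerSL ℂ (e (α i)))

open Filter Topology Metric Finset Pointwise

section Generic

/-- Compactness of a map into a closed subset, viewed in the subtype, is equivalent to
compactness in the ambient space. -/
lemma isCompactOperator_subtype_iff {M₁ M₂ : Type*} [Zero M₁] [TopologicalSpace M₁]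
    [TopologicalSpace M₂] [T2Space M₂] {S : Set M₂} (hS : IsClosed S)
    {F : M₁ → M₂} (hF : ∀ v, F v ∈ S) :
    IsCompactOperator (fun v => (⟨F v, hF v⟩ : S)) ↔ IsCompactOperator F := by
  constructor
  · rintro ⟨K, hK, hKF⟩
    exact ⟨Subtype.val '' K, hK.image continuous_subtype_val,
      Filter.mem_of_superset hKF fun v hv => ⟨_, hv, rfl⟩⟩
  · rintro ⟨K, hK, hKF⟩
    set L := closure (F '' (F ⁻¹' K)) with hL
    have hLK : L ⊆ K := closure_minimal (Set.image_preimage_subset _ _) hK.isClosed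
    have hLc : IsCompact L := hK.of_isClosed_subset isClosed_closure hLK
    have hLS : L ⊆ S := closure_minimal (by rintro x ⟨v, -, rfl⟩; exact hF v) hS
    refine ⟨Subtype.val ⁻¹' L, ?_, ?_⟩
    · rw [Topology.IsEmbedding.subtypeVal.isCompact_iff]
      rwa [Set.image_preimage_eq_of_subset (by rwa [Subtype.range_coe])]
    · exact Filter.mem_of_superset hKF fun v hv => subset_closure ⟨v, hv, rfl⟩

/-- A rank one map is a compact operator. -/
lemma isCompactOperator_inner_smul {V M : Type*} [NormedAddCommGroup V]
    [InnerProductSpace ℂ V] [NormedAddCommGroup M] [NormedSpace ℂ M] (u : V) (m : M) :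
    IsCompactOperator (fun v : V => (inner ℂ u v : ℂ) • m) := by
  refine ⟨(fun c : ℂ => c • m) '' Metric.closedBall 0 ‖u‖,
    (isCompact_closedBall _ _).image (continuous_id.smul continuous_const), ?_⟩
  refine Filter.mem_of_superset (Metric.closedBall_mem_nhds (0 : V) zero_lt_one) ?_
  intro v hv
  refine ⟨inner ℂ u v, ?_, rfl⟩
  rw [Metric.mem_closedBall, dist_zero_right] at hv ⊢
  calc ‖(inner ℂ u v : ℂ)‖ ≤ ‖u‖ * ‖v‖ := norm_inner_le_norm u v
    _ ≤ ‖u‖ * 1 := by gcongr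
    _ = ‖u‖ := mul_one _

/-- A continuous linear map sends the closure of a span into the closure of the span of
a set, provided it sends generators into the latter span. -/
lemma mapsClosureSpan {M N : Type*} [NormedAddCommGroup M] [NormedSpace ℂ M]
    [NormedAddCommGroup N] [NormedSpace ℂ N] (L : M →L[ℂ] N)
    {S : Set M} {T : Set N} (h : ∀ s ∈ S, L s ∈ Submodule.span ℂ T)
    {x : M} (hx : x ∈ closure (↑(Submodule.span ℂ S) : Set M)) :
    L x ∈ closure (↑(Submodule.span ℂ T) : Set N) := by
  have h1 : (Submodule.span ℂ S : Set M) ⊆ L ⁻¹' (Submodule.span ℂ T : Set N) := by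
    intro y hy
    exact (Submodule.span_le.2 (fun s hs => h s hs) : Submodule.span ℂ S ≤
      (Submodule.span ℂ T).comap (L : M →ₗ[ℂ] N)) hy
  have := Set.mem_image_of_mem L hx
  have h2 := (image_closure_subset_closure_image L.continuous) this
  refine closure_mono ?_ h2
  rintro y ⟨z, hz, rfl⟩
  exact h1 hz

end Generic

section Main

variable {V W : Type*}
    [NormedAddCommGroup V] [InnerProductSpace ℂ V]
    [NormedAddCommGroup W] [NormedSpace ℂ W]

lemma curryLeft_elem (n : ℕ) (e : ℕ → V) (f : ℕ → W) (α : Fin (n+1) → ℕ) (k : ℕ) :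
    (elemMultilinear (n+1) e f α k).curryLeft
      = (innerSL ℂ (e (α 0))).smulRight (elemMultilinear n e f (Fin.tail α) k) := by
  ext v m
  simp [elemMultilinear, Fin.prod_univ_succ, Fin.tail, smul_smul]

lemma kAux [CompleteSpace W] (n : ℕ) :
    IsClosed (KMultilinear ℂ V W n) ∧
    ∀ g : ContinuousMultilinearMap ℂ (fun _ : Fin (n+1) => V) W,
      g ∈ KMultilinear ℂ V W (n+1) ↔
        (∀ v, g.curryLeft v ∈ KMultilinear ℂ V W n) ∧
          IsCompactOperator fun v => g.curryLeft v := by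
  induction n with
  | zero =>
    refine ⟨isClosed_univ, ?_⟩
    intro g
    have h1 : (fun v => g.curryLeft v)
        = (continuousMultilinearCurryFin0 ℂ V W).symm ∘ (fun v : V => g fun _ => v) := by
      funext v
      ext m
      simp only [Function.comp_apply, continuousMultilinearCurryFin0_symm_apply,
        ContinuousMultilinearMap.curryLeft_apply]
      refine congrArg g ?_
      funext i
      rw [show i = 0 from Subsingleton.elim (α := Fin 1) i 0, Fin.cons_zero]
    constructor
    · intro hg
      refine ⟨fun v => trivial, ?_⟩
      rw [h1]
      exact IsCompactOperator.continuous_comp hg (LinearIsometryEquiv.continuous _)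
    · rintro ⟨-, hc⟩
      show IsCompactOperator fun v : V => g fun _ => v
      have h2 : (fun v : V => g fun _ => v)
          = (continuousMultilinearCurryFin0 ℂ V W) ∘ (fun v => g.curryLeft v) := by
        rw [h1]; funext v; simp
      rw [h2]
      exact IsCompactOperator.continuous_comp hc (LinearIsometryEquiv.continuous _)
  | succ n ih =>
    obtain ⟨ihC, ihChar⟩ := ih
    have hcont : ∀ v : V, Continuous
        (fun g : ContinuousMultilinearMap ℂ (fun _ : Fin (n+1) => V) W => g.curryLeft v) :=
      fun v => (ContinuousLinearMap.apply ℂ _ v).continuous.comp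
        (continuousMultilinearCurryLeftEquiv ℂ (fun _ : Fin (n+1) => V) W).continuous
    have hclosed : IsClosed (KMultilinear ℂ V W (n+1)) := by
      have hEq : KMultilinear ℂ V W (n+1)
          = (⋂ v : V, (fun g : ContinuousMultilinearMap ℂ (fun _ : Fin (n+1) => V) W =>
              g.curryLeft v) ⁻¹' (KMultilinear ℂ V W n))
            ∩ ((continuousMultilinearCurryLeftEquiv ℂ (fun _ : Fin (n+1) => V) W) ⁻¹'
              {T | IsCompactOperator ⇑T}) := by
        ext g
        rw [ihChar g]
        simp only [Set.mem_inter_iff, Set.mem_iInter, Set.mem_preimage, Set.mem_setOf_eq]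
        exact Iff.rfl
      rw [hEq]
      exact (isClosed_iInter fun v => ihC.preimage (hcont v)).inter
        (isClosed_setOf_isCompactOperator.preimage (LinearIsometryEquiv.continuous _))
    refine ⟨hclosed, ?_⟩
    intro g
    constructor
    · rintro ⟨hf, hc⟩
      exact ⟨hf, (isCompactOperator_subtype_iff hclosed hf).mp hc⟩
    · rintro ⟨hf, hc⟩
      exact ⟨hf, (isCompactOperator_subtype_iff hclosed hf).mpr hc⟩

lemma smulK [CompleteSpace W] (n : ℕ) (c : ℂ)
    (g : ContinuousMultilinearMap ℂ (fun _ : Fin n => V) W)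
    (hg : g ∈ KMultilinear ℂ V W n) : c • g ∈ KMultilinear ℂ V W n := by
  induction n with
  | zero => trivial
  | succ n ih =>
    rw [(kAux n).2] at hg ⊢
    refine ⟨fun v => ?_, ?_⟩
    · show c • g.curryLeft v ∈ KMultilinear ℂ V W n
      exact ih _ (hg.1 v)
    · show IsCompactOperator (c • fun v => g.curryLeft v)
      exact hg.2.smul c

lemma memK [CompleteSpace W] (e : ℕ → V) (f : ℕ → W) (n : ℕ) (α : Fin n → ℕ) (k : ℕ) :
    elemMultilinear n e f α k ∈ KMultilinear ℂ V W n := by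
  induction n with
  | zero => trivial
  | succ n ih =>
    rw [(kAux n).2]
    refine ⟨fun v => ?_, ?_⟩
    · rw [curryLeft_elem]
      show (inner ℂ (e (α 0)) v : ℂ) • elemMultilinear n e f (Fin.tail α) k
        ∈ KMultilinear ℂ V W n
      exact smulK n _ _ (ih (Fin.tail α))
    · rw [curryLeft_elem]
      exact isCompactOperator_inner_smul (e (α 0)) (elemMultilinear n e f (Fin.tail α) k)

lemma lemmaA {W' : Type*} [CompleteSpace V] [NormedAddCommGroup W'] [NormedSpace ℂ W']
    (e : ℕ → V) (he : Orthonormal ℂ e)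
    (hespan : Dense (↑(Submodule.span ℂ (Set.range e)) : Set V))
    (T : V →L[ℂ] W') (hT : IsCompactOperator fun v => T v) :
    Tendsto (fun N => ‖T - ∑ j ∈ Finset.range N, (innerSL ℂ (e j)).smulRight (T (e j))‖)
      atTop (𝓝 0) := by
  classical
  set P : ℕ → V → V := fun m z => ∑ j ∈ Finset.range m, (inner ℂ (e j) z : ℂ) • e j with hPdef
  set D : ℕ → V →L[ℂ] W' :=
    fun N => T - ∑ j ∈ Finset.range N, (innerSL ℂ (e j)).smulRight (T (e j)) with hDdef
  have hespan' : ⊤ ≤ (Submodule.span ℂ (Set.range e)).topologicalClosure := by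
    intro x _
    rw [← SetLike.mem_coe, Submodule.topologicalClosure_coe, hespan.closure_eq]
    trivial
  have hP : ∀ z : V, Tendsto (fun m => P m z) atTop (𝓝 z) := by
    intro z
    obtain ⟨b, hbcoe⟩ : ∃ b : HilbertBasis ℕ ℂ V, ⇑b = e :=
      ⟨HilbertBasis.mk he hespan', HilbertBasis.coe_mk he hespan'⟩
    have hb := b.hasSum_repr z
    have heq : (fun i => b.repr z i • b i) = fun i : ℕ => (inner ℂ (e i) z : ℂ) • e i := by
      funext i
      rw [HilbertBasis.repr_apply_apply, hbcoe]
    rw [heq] at hb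
    exact hb.tendsto_sum_nat
  have hD : ∀ (N : ℕ) (x : V), D N x = T (x - P N x) := by
    intro N x
    simp only [hDdef, hPdef, ContinuousLinearMap.sub_apply, ContinuousLinearMap.sum_apply,
      ContinuousLinearMap.smulRight_apply, innerSL_apply_apply, map_sub, map_sum, map_smul]
  have horthE : ∀ (m : ℕ) (x : V) (j : ℕ), j < m → (inner ℂ (e j) (x - P m x) : ℂ) = 0 := by
    intro m x j hj
    rw [inner_sub_right]
    have h1 : (inner ℂ (e j) (P m x) : ℂ) = inner ℂ (e j) x := by
      rw [hPdef]
      simp only [inner_sum, inner_smul_right]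
      rw [Finset.sum_eq_single j]
      · rw [orthonormal_iff_ite.mp he j j]; simp
      · intro i _ hij
        rw [orthonormal_iff_ite.mp he j i, if_neg fun h => hij h.symm, mul_zero]
      · intro hjm; exact absurd (Finset.mem_range.mpr hj) hjm
    rw [h1, sub_self]
  have horthP : ∀ (m : ℕ) (z x : V), (∀ j < m, (inner ℂ (e j) x : ℂ) = 0) →
      (inner ℂ (P m z) x : ℂ) = 0 := by
    intro m z x hx
    rw [hPdef]
    rw [sum_inner]
    refine Finset.sum_eq_zero fun j hj => ?_
    rw [inner_smul_left, hx j (Finset.mem_range.mp hj), mul_zero]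
  have hubd : ∀ (m : ℕ) (x : V), ‖x - P m x‖ ≤ ‖x‖ := by
    intro m x
    have h0 : (inner ℂ (P m x) (x - P m x) : ℂ) = 0 :=
      horthP m x _ (fun j hj => horthE m x j hj)
    have hx : x = P m x + (x - P m x) := by abel
    have hnorm : ‖x‖ ^ 2 = ‖P m x‖ ^ 2 + 2 * Complex.re (0 : ℂ) + ‖x - P m x‖ ^ 2 := by
      nth_rewrite 1 [hx]
      rw [← h0]
      exact norm_add_sq (𝕜 := ℂ) _ _
    simp only [Complex.zero_re, mul_zero, add_zero] at hnorm
    nlinarith [norm_nonneg (P m x), norm_nonneg x, norm_nonneg (x - P m x)]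
  by_contra hcon
  rw [Metric.tendsto_atTop] at hcon
  push_neg at hcon
  obtain ⟨ε, hε, hfr⟩ := hcon
  choose M hM hMd using hfr
  have hDn : ∀ N, ε ≤ ‖D (M N)‖ := by
    intro N
    have := hMd N
    rwa [Real.dist_eq, sub_zero, abs_norm] at this
  have hvex : ∀ N, ∃ x : V, ‖x‖ < 1 ∧ ε / 2 < ‖D (M N) x‖ := fun N =>
    (D (M N)).exists_lt_apply_of_lt_opNorm (lt_of_lt_of_le (by linarith) (hDn N))
  choose v hv1 hv2 using hvex
  set u : ℕ → V := fun N => v N - P (M N) (v N) with hu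
  have hTu : ∀ N, ε / 2 < ‖T (u N)‖ := by
    intro N
    have h := hv2 N
    rwa [hD (M N) (v N)] at h
  have hun : ∀ N, ‖u N‖ ≤ 1 := fun N => le_trans (hubd _ _) (hv1 N).le
  have huorth : ∀ N, ∀ j < M N, (inner ℂ (e j) (u N) : ℂ) = 0 := fun N j hj => horthE _ _ j hj
  obtain ⟨K, hK, hKmem⟩ := hT
  obtain ⟨δ, hδ, hball⟩ := Metric.mem_nhds_iff.mp hKmem
  set c : ℂ := ((δ / 2 : ℝ) : ℂ) with hc
  have hcnorm : ‖c‖ = δ / 2 := by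
    rw [hc, Complex.norm_real, Real.norm_eq_abs, abs_of_pos (by linarith)]
  have hc0 : c ≠ 0 := by
    intro h
    rw [h, norm_zero] at hcnorm
    linarith
  have hTuK : ∀ N, T (u N) ∈ c⁻¹ • K := by
    intro N
    have h1 : c • u N ∈ Metric.ball (0 : V) δ := by
      rw [mem_ball_zero_iff, norm_smul, hcnorm]
      calc δ / 2 * ‖u N‖ ≤ δ / 2 * 1 := by
            exact mul_le_mul_of_nonneg_left (hun N) (by linarith)
        _ < δ := by linarith
    have h2 : T (c • u N) ∈ K := hball h1
    rw [map_smul] at h2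
    have h3 := Set.smul_mem_smul_set (a := c⁻¹) h2
    rwa [inv_smul_smul₀ hc0] at h3
  have hKc : IsCompact ((c⁻¹ • K : Set W')) := hK.smul c⁻¹
  obtain ⟨w, hwK, φ, hφ, hconv⟩ := hKc.tendsto_subseq hTuK
  have hwn : ε / 2 ≤ ‖w‖ :=
    ge_of_tendsto hconv.norm (Filter.Eventually.of_forall fun m => (hTu (φ m)).le)
  have hMtop : Tendsto M atTop atTop := tendsto_atTop_mono hM tendsto_id
  have hw0 : w = 0 := by
    apply NormedSpace.eq_zero_of_forall_dual_eq_zero ℂ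
    intro ψ
    set z := (InnerProductSpace.toDual ℂ V).symm (ψ.comp T) with hzdef
    have hzin : ∀ x : V, (inner ℂ z x : ℂ) = ψ (T x) := fun x =>
      InnerProductSpace.toDual_symm_apply
    have hzu : Tendsto (fun N => (inner ℂ z (u N) : ℂ)) atTop (𝓝 0) := by
      have hb : ∀ N, ‖(inner ℂ z (u N) : ℂ)‖ ≤ ‖z - P (M N) z‖ := by
        intro N
        have h1 : (inner ℂ z (u N) : ℂ) = inner ℂ (z - P (M N) z) (u N) := by
          rw [inner_sub_left, horthP (M N) z (u N) (huorth N), sub_zero]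
        rw [h1]
        calc ‖(inner ℂ (z - P (M N) z) (u N) : ℂ)‖ ≤ ‖z - P (M N) z‖ * ‖u N‖ :=
              norm_inner_le_norm _ _
          _ ≤ ‖z - P (M N) z‖ * 1 :=
              mul_le_mul_of_nonneg_left (hun N) (norm_nonneg _)
          _ = ‖z - P (M N) z‖ := mul_one _
      have hz0 : Tendsto (fun m => ‖z - P m z‖) atTop (𝓝 0) := by
        have h2 := ((tendsto_const_nhds (x := z) (f := atTop)).sub (hP z)).norm
        simpa using h2
      exact squeeze_zero_norm hb (hz0.comp hMtop)
    have h1 : Tendsto (fun m => ψ (T (u (φ m)))) atTop (𝓝 (ψ w)) :=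
      (ψ.continuous.tendsto w).comp hconv
    have h2 : Tendsto (fun m => ψ (T (u (φ m)))) atTop (𝓝 0) := by
      have h3 := hzu.comp hφ.tendsto_atTop
      have h4 : (fun m => ψ (T (u (φ m)))) = fun m => (inner ℂ z (u (φ m)) : ℂ) :=
        funext fun m => (hzin _).symm
      rw [h4]
      exact h3
    exact tendsto_nhds_unique h1 h2
  rw [hw0, norm_zero] at hwn
  linarith

lemma denseK [CompleteSpace V] [CompleteSpace W]
    (e : ℕ → V) (he : Orthonormal ℂ e)
    (hespan : Dense (↑(Submodule.span ℂ (Set.range e)) : Set V))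
    (f : ℕ → W)
    (hfspan : Dense (↑(Submodule.span ℂ (Set.range f)) : Set W))
    (n : ℕ) :
    ∀ g ∈ KMultilinear ℂ V W n,
      g ∈ closure (↑(Submodule.span ℂ (Set.range
        fun p : (Fin n → ℕ) × ℕ => elemMultilinear n e f p.1 p.2)) :
        Set (ContinuousMultilinearMap ℂ (fun _ : Fin n => V) W)) := by
  induction n with
  | zero =>
    intro g _
    set L : W →L[ℂ] ContinuousMultilinearMap ℂ (fun _ : Fin 0 => V) W :=
      (continuousMultilinearCurryFin0 ℂ V W).symm.toLinearIsometry.toContinuousLinearMap with hL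
    have hg0 : (continuousMultilinearCurryFin0 ℂ V W) g
        ∈ closure (↑(Submodule.span ℂ (Set.range f)) : Set W) := by
      rw [hfspan.closure_eq]; trivial
    have hgen : ∀ s ∈ Set.range f, L s ∈ Submodule.span ℂ (Set.range
        fun p : (Fin 0 → ℕ) × ℕ => elemMultilinear 0 e f p.1 p.2) := by
      rintro s ⟨k, rfl⟩
      have h1 : L (f k) = elemMultilinear 0 e f (fun i => i.elim0) k := by
        ext m
        simp [hL, elemMultilinear, LinearIsometry.coe_toContinuousLinearMap,
          continuousMultilinearCurryFin0_symm_apply]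
      rw [h1]
      exact Submodule.subset_span ⟨((fun i => i.elim0), k), rfl⟩
    have hmain := mapsClosureSpan L hgen hg0
    have h2 : L ((continuousMultilinearCurryFin0 ℂ V W) g) = g :=
      (continuousMultilinearCurryFin0 ℂ V W).symm_apply_apply g
    rwa [h2] at hmain
  | succ n ih =>
    intro g hg
    rw [(kAux n).2] at hg
    obtain ⟨hmem, hcomp⟩ := hg
    set E := continuousMultilinearCurryLeftEquiv ℂ (fun _ : Fin (n+1) => V) W with hE
    have main := lemmaA e he hespan g.curryLeft hcomp
    set G : ℕ → ContinuousMultilinearMap ℂ (fun _ : Fin (n+1) => V) W := fun N =>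
      E.symm (∑ j ∈ Finset.range N, (innerSL ℂ (e j)).smulRight (g.curryLeft (e j))) with hG
    set C := Submodule.span ℂ (Set.range
      fun p : (Fin (n+1) → ℕ) × ℕ => elemMultilinear (n+1) e f p.1 p.2) with hC
    have hnorm : ∀ N, ‖G N - g‖ = ‖g.curryLeft
        - ∑ j ∈ Finset.range N, (innerSL ℂ (e j)).smulRight (g.curryLeft (e j))‖ := by
      intro N
      rw [← E.norm_map (G N - g), E.map_sub, hG, E.apply_symm_apply]
      have hEg : E g = g.curryLeft := rfl
      rw [hEg]
      exact norm_sub_rev (∑ j ∈ Finset.range N, (innerSL ℂ (e j)).smulRight (g.curryLeft (e j)))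
        g.curryLeft
    have htend : Tendsto G atTop (𝓝 g) := by
      rw [tendsto_iff_norm_sub_tendsto_zero]
      simp only [hnorm]
      exact main
    have hGmem : ∀ N, G N ∈ C.topologicalClosure := by
      intro N
      have hsum : G N = ∑ j ∈ Finset.range N,
          E.symm ((innerSL ℂ (e j)).smulRight (g.curryLeft (e j))) := by
        rw [hG]
        have := map_sum E.symm.toLinearEquiv
          (fun j => (innerSL ℂ (e j)).smulRight (g.curryLeft (e j))) (Finset.range N)
        simpa only [LinearIsometryEquiv.coe_toLinearEquiv] using this
      rw [hsum]
      refine Submodule.sum_mem _ ?_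
      intro j _
      set Lj : ContinuousMultilinearMap ℂ (fun _ : Fin n => V) W →L[ℂ]
          ContinuousMultilinearMap ℂ (fun _ : Fin (n+1) => V) W :=
        (E.symm.toLinearIsometry.toContinuousLinearMap).comp
          (ContinuousLinearMap.smulRightL ℂ V
            (ContinuousMultilinearMap ℂ (fun _ : Fin n => V) W) (innerSL ℂ (e j))) with hLj
      have happ : ∀ h, Lj h = E.symm ((innerSL ℂ (e j)).smulRight h) := fun h => rfl
      have hgen : ∀ s ∈ Set.range (fun p : (Fin n → ℕ) × ℕ => elemMultilinear n e f p.1 p.2),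
          Lj s ∈ C := by
        rintro s ⟨⟨α, k⟩, rfl⟩
        have h3 : (elemMultilinear (n+1) e f (Fin.cons j α) k).curryLeft
            = (innerSL ℂ (e j)).smulRight (elemMultilinear n e f α k) := by
          rw [curryLeft_elem]
          simp only [Fin.cons_zero, Fin.tail_cons]
        have hid : Lj (elemMultilinear n e f α k)
            = elemMultilinear (n+1) e f (Fin.cons j α) k := by
          rw [happ, ← h3]
          exact E.symm_apply_apply _
        rw [hid, hC]
        exact Submodule.subset_span ⟨(Fin.cons j α, k), rfl⟩
      have h2 := mapsClosureSpan Lj hgen (ih (g.curryLeft (e j)) (hmem (e j)))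
      rw [happ] at h2
      rwa [← Submodule.topologicalClosure_coe, SetLike.mem_coe] at h2
    rw [← Submodule.topologicalClosure_coe]
    exact C.isClosed_topologicalClosure.mem_of_tendsto htend
      (Filter.Eventually.of_forall hGmem)

end Main

/-- Let `V` be a separable complex Hilbert space with a Hilbert basis
`{e_j}`, `W` a separable Banach space and `{f_k} ⊆ W` a countable subset with dense span,
and `n ≥ 1`. Then each `e^α ⊗ f_k` lies in `K^n(V,W)`, and the span of
`{e^α ⊗ f_k : α ∈ ℕ^n, k ∈ ℕ}` is dense in `K^n(V,W)` for the multilinear operator norm. -/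
theorem span_elemMultilinear_dense_in_KMultilinear
    {V W : Type*}
    [NormedAddCommGroup V] [InnerProductSpace ℂ V] [CompleteSpace V]
    [TopologicalSpace.SeparableSpace V]
    [NormedAddCommGroup W] [NormedSpace ℂ W] [CompleteSpace W]
    [TopologicalSpace.SeparableSpace W]
    (n : ℕ) (hn : 1 ≤ n)
    (e : ℕ → V) (he : Orthonormal ℂ e)
    (hespan : Dense (↑(Submodule.span ℂ (Set.range e)) : Set V))
    (f : ℕ → W)
    (hfspan : Dense (↑(Submodule.span ℂ (Set.range f)) : Set W)) :
    (∀ (α : Fin n → ℕ) (k : ℕ), elemMultilinear n e f α k ∈ KMultilinear ℂ V W n) ∧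
      ∀ g ∈ KMultilinear ℂ V W n,
        g ∈ closure (↑(Submodule.span ℂ (Set.range
          fun p : (Fin n → ℕ) × ℕ => elemMultilinear n e f p.1 p.2)) :
          Set (ContinuousMultilinearMap ℂ (fun _ : Fin n => V) W)) := by
  exact ⟨fun α k => memK e f n α k, denseK e he hespan f hfspan n⟩
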